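/- If the conic q = 0 (with Disc(q) ≠ 0, Det(q) ≠ 0) has a rational point Q₀, then taking R₀ = Q₀, every rational point P on the conic satisfies P·Q₀*·R₀ = P, and for every P the point R = Q₀·P*·R₀ satisfies P·Q₀*·R = R₀; hence the rational points of the conic form a commutative ternary group. -/
import Mathlib

set_option maxHeartbeats 1600000

/-- The matrix `[x,y]_q`. -/
def Mq (a b c h k x y : ℚ) : Matrix (Fin 2) (Fin 2) ℚ :=
  !![x - h, -c * (y - k); y - k, a * (x - h) + b * (y - k)]

lemma Mq_det (a b c h k x y : ℚ) :
    (Mq a b c h k x y).det =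
      a * (x - h) ^ 2 + b * (x - h) * (y - k) + c * (y - k) ^ 2 := by
  simp [Mq, Matrix.det_fin_two_of]; ring

lemma Mq_inv (a b c h k x y m : ℚ) (hm : m ≠ 0)
    (hdet : (Mq a b c h k x y).det = m) :
    (Mq a b c h k x y)⁻¹ =
      m⁻¹ • !![a * (x - h) + b * (y - k), c * (y - k); -(y - k), x - h] := by
  apply Matrix.inv_eq_right_inv
  have h1 : Mq a b c h k x y *
      !![a * (x - h) + b * (y - k), c * (y - k); -(y - k), x - h] =
      m • (1 : Matrix (Fin 2) (Fin 2) ℚ) := by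
    rw [Mq_det] at hdet
    ext i j
    fin_cases i <;> fin_cases j <;>
      simp [Mq, Matrix.mul_apply, Fin.sum_univ_two, Matrix.one_apply,
        Matrix.smul_apply] <;>
      first
        | linear_combination hdet
        | linear_combination (2 : ℚ) * hdet
        | linear_combination (-1 : ℚ) * hdet
        | linear_combination (-2 : ℚ) * hdet
        | ring
  rw [Matrix.mul_smul, h1, smul_smul, inv_mul_cancel₀ hm, one_smul]

/-- If the conic `q = 0` has a rational point `Q₀`, then with `R₀ = Q₀` every
rational point `P` on the conic satisfies `P·Q₀*·R₀ = P`, and `R = Q₀·P*·R₀`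
is a rational point on the conic satisfying `P·Q₀*·R = R₀` (all products taken
in the matrix representation). -/
theorem conic_ternary_group_identity_and_inverses (a b c d e f h k : ℚ)
    (hDisc : a * c - b ^ 2 / 4 ≠ 0)
    (hDet : Matrix.det !![a, b / 2, d / 2; b / 2, c, e / 2; d / 2, e / 2, f] ≠ 0)
    (hh : h = (b / 2 * (e / 2) - c * (d / 2)) / (a * c - b ^ 2 / 4))
    (hk : k = -(a * (e / 2) - b / 2 * (d / 2)) / (a * c - b ^ 2 / 4))
    (x0 y0 : ℚ)
    (hQ0 : a * x0 ^ 2 + b * x0 * y0 + c * y0 ^ 2 + d * x0 + e * y0 + f = 0) :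
    ∀ x y : ℚ,
      a * x ^ 2 + b * x * y + c * y ^ 2 + d * x + e * y + f = 0 →
      (Mq a b c h k x y * (Mq a b c h k x0 y0)⁻¹ * Mq a b c h k x0 y0 =
        Mq a b c h k x y) ∧
      (∃ xr yr : ℚ,
        a * xr ^ 2 + b * xr * yr + c * yr ^ 2 + d * xr + e * yr + f = 0 ∧
        Mq a b c h k x0 y0 * (Mq a b c h k x y)⁻¹ * Mq a b c h k x0 y0 =
          Mq a b c h k xr yr ∧
        Mq a b c h k x y * (Mq a b c h k x0 y0)⁻¹ * Mq a b c h k xr yr =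
          Mq a b c h k x0 y0) := by
  have h32 : a * c * 32 - b ^ 2 * 8 ≠ 0 := by
    intro h0; apply hDisc; linarith
  -- center equations
  have hhD : h * (a * c - b ^ 2 / 4) = b / 2 * (e / 2) - c * (d / 2) := by
    rw [hh, div_mul_cancel₀ _ hDisc]
  have hkD : k * (a * c - b ^ 2 / 4) = -(a * (e / 2) - b / 2 * (d / 2)) := by
    rw [hk, div_mul_cancel₀ _ hDisc]
  have e1 : 2 * a * h + b * k + d = 0 := by
    have h' : (2 * a * h + b * k + d) * (a * c - b ^ 2 / 4) = 0 := by
      linear_combination 2 * a * hhD + b * hkD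
    rcases mul_eq_zero.mp h' with h0 | h0
    · exact h0
    · exact absurd h0 hDisc
  have e2 : b * h + 2 * c * k + e = 0 := by
    have h' : (b * h + 2 * c * k + e) * (a * c - b ^ 2 / 4) = 0 := by
      linear_combination b * hhD + 2 * c * hkD
    rcases mul_eq_zero.mp h' with h0 | h0
    · exact h0
    · exact absurd h0 hDisc
  have hd : d = -(2 * a * h + b * k) := by linarith
  have he : e = -(b * h + 2 * c * k) := by linarith
  set m : ℚ := a * h ^ 2 + b * h * k + c * k ^ 2 - f with hmdef
  clear_value m
  -- the conic equation is equivalent to the shifted quadratic form equalling m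
  have key : ∀ x y : ℚ,
      a * x ^ 2 + b * x * y + c * y ^ 2 + d * x + e * y + f = 0 ↔
      a * (x - h) ^ 2 + b * (x - h) * (y - k) + c * (y - k) ^ 2 = m := by
    intro x y
    constructor
    · intro hc
      first
        | linear_combination hc - x * e1 - y * e2 - hmdef
        | linear_combination hc - x * e1 - y * e2 + hmdef
    · intro hc
      first
        | linear_combination hc + x * e1 + y * e2 + hmdef
        | linear_combination hc + x * e1 + y * e2 - hmdef
  have hDet3 : Matrix.det !![a, b / 2, d / 2; b / 2, c, e / 2; d / 2, e / 2, f]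
      = (a * c - b ^ 2 / 4) * (-m) := by
    rw [hd, he, hmdef]
    simp [Matrix.det_fin_three]
    ring
  have hm : m ≠ 0 := by
    intro h0
    apply hDet
    rw [hDet3, h0]; ring
  have hdetQ0 : (Mq a b c h k x0 y0).det = m := by
    rw [Mq_det]; exact (key x0 y0).mp hQ0
  have hQ0unit : IsUnit (Mq a b c h k x0 y0).det := by
    rw [hdetQ0]; exact isUnit_iff_ne_zero.mpr hm
  intro x y hxy
  have hdetP : (Mq a b c h k x y).det = m := by
    rw [Mq_det]; exact (key x y).mp hxy
  have hPunit : IsUnit (Mq a b c h k x y).det := by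
    rw [hdetP]; exact isUnit_iff_ne_zero.mpr hm
  refine ⟨by rw [mul_assoc, Matrix.nonsing_inv_mul _ hQ0unit, mul_one], ?_⟩
  have hq : a * (x0 - h) ^ 2 + b * (x0 - h) * (y0 - k) + c * (y0 - k) ^ 2 = m :=
    (key x0 y0).mp hQ0
  have hpm : a * (x - h) ^ 2 + b * (x - h) * (y - k) + c * (y - k) ^ 2 = m :=
    (key x y).mp hxy
  obtain ⟨X, hX⟩ : ∃ X : ℚ, X = (a * (x0 - h) ^ 2 - c * (y0 - k) ^ 2) * (x - h) +
      (b * (x0 - h) ^ 2 + 2 * c * (x0 - h) * (y0 - k)) * (y - k) := ⟨_, rfl⟩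
  obtain ⟨Y, hY⟩ : ∃ Y : ℚ, Y = (2 * a * (x0 - h) * (y0 - k) + b * (y0 - k) ^ 2) * (x - h) +
      (c * (y0 - k) ^ 2 - a * (x0 - h) ^ 2) * (y - k) := ⟨_, rfl⟩
  have hRmat : Mq a b c h k x0 y0 * (Mq a b c h k x y)⁻¹ * Mq a b c h k x0 y0 =
      Mq a b c h k (h + X / m) (k + Y / m) := by
    rw [Mq_inv a b c h k x y m hm hdetP, Matrix.mul_smul, Matrix.smul_mul]
    have hprod : Mq a b c h k x0 y0 *
        !![a * (x - h) + b * (y - k), c * (y - k); -(y - k), x - h] *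
          Mq a b c h k x0 y0 = !![X, -c * Y; Y, a * X + b * Y] := by
      ext i j
      fin_cases i <;> fin_cases j <;>
        simp [Mq, Matrix.mul_apply, Fin.sum_univ_two] <;>
        simp only [hX, hY] <;> ring
    rw [hprod]
    ext i j
    fin_cases i <;> fin_cases j <;>
      simp [Mq, Matrix.smul_apply] <;> field_simp <;> ring
  refine ⟨h + X / m, k + Y / m, ?_, hRmat, ?_⟩
  · rw [key]
    have hXY : a * X ^ 2 + b * X * Y + c * Y ^ 2 =
        (a * (x0 - h) ^ 2 + b * (x0 - h) * (y0 - k) + c * (y0 - k) ^ 2) ^ 2 *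
          (a * (x - h) ^ 2 + b * (x - h) * (y - k) + c * (y - k) ^ 2) := by
      rw [hX, hY]; ring
    have h1 : h + X / m - h = X / m := by ring
    have h2 : k + Y / m - k = Y / m := by ring
    rw [h1, h2]
    calc a * (X / m) ^ 2 + b * (X / m) * (Y / m) + c * (Y / m) ^ 2
        = (a * X ^ 2 + b * X * Y + c * Y ^ 2) / m ^ 2 := by ring
      _ = (m ^ 2 * m) / m ^ 2 := by rw [hXY, hq, hpm]
      _ = m := by field_simp
  · rw [← hRmat]
    simp only [mul_assoc]
    rw [← mul_assoc (Mq a b c h k x0 y0)⁻¹, Matrix.nonsing_inv_mul _ hQ0unit,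
      one_mul, ← mul_assoc, Matrix.mul_nonsing_inv _ hPunit, one_mul]
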